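/- The set of functions in L²(ball(0,1), ℂ) that are (a.e. equal to) holomorphic functions on the open unit ball in ℂ is a closed subspace of L²(ball(0,1), ℂ). -/

import Mathlib

open Metric Complex MeasureTheory Set Real Filter Topology

section BergmanAux

theorem lintegral_comp_polarCoord_symm' (f : ℝ × ℝ → ENNReal) :
    ∫⁻ p in polarCoord.target, ENNReal.ofReal p.1 * f (polarCoord.symm p) = ∫⁻ p, f p := by
  set B : ℝ × ℝ → ℝ × ℝ →L[ℝ] ℝ × ℝ := fun p =>
    LinearMap.toContinuousLinearMap (Matrix.toLin (Module.Basis.finTwoProd ℝ) (Module.Basis.finTwoProd ℝ)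
      !![Real.cos p.2, -p.1 * Real.sin p.2; Real.sin p.2, p.1 * Real.cos p.2])
  have A : ∀ p ∈ polarCoord.target, HasFDerivWithinAt polarCoord.symm (B p) polarCoord.target p :=
    fun p _ => (hasFDerivAt_polarCoord_symm p).hasFDerivWithinAt
  have B_det : ∀ p, (B p).det = p.1 := by
    intro p
    conv_rhs => rw [← one_mul p.1, ← Real.cos_sq_add_sin_sq p.2]
    simp only [B, neg_mul, LinearMap.det_toContinuousLinearMap, LinearMap.det_toLin,
      Matrix.det_fin_two_of, sub_neg_eq_add]
    ring
  symm
  have hinj : Set.InjOn polarCoord.symm polarCoord.target := by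
    have := polarCoord.symm.injOn
    rwa [OpenPartialHomeomorph.symm_source] at this
  calc
    ∫⁻ p, f p = ∫⁻ p in polarCoord.source, f p := by
      rw [← setLIntegral_univ]
      exact (setLIntegral_congr polarCoord_source_ae_eq_univ.symm)
    _ = ∫⁻ p in polarCoord.symm '' polarCoord.target, f p := by
      rw [polarCoord.symm_image_target_eq_source]
    _ = ∫⁻ p in polarCoord.target, ENNReal.ofReal |(B p).det| * f (polarCoord.symm p) :=
      lintegral_image_eq_lintegral_abs_det_fderiv_mul volume
        polarCoord.open_target.measurableSet A hinj f
    _ = ∫⁻ p in polarCoord.target, ENNReal.ofReal p.1 * f (polarCoord.symm p) := by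
      refine setLIntegral_congr_fun polarCoord.open_target.measurableSet
        (fun p hp => ?_)
      rw [B_det, abs_of_pos hp.1]

theorem Complex.lintegral_comp_polarCoord_symm' (f : ℂ → ENNReal) :
    ∫⁻ p in polarCoord.target, ENNReal.ofReal p.1 * f (Complex.polarCoord.symm p) = ∫⁻ z, f z := by
  rw [← (Complex.volume_preserving_equiv_real_prod.symm).lintegral_comp_emb
    Complex.measurableEquivRealProd.symm.measurableEmbedding, ← _root_.lintegral_comp_polarCoord_symm']
  rfl

theorem circle_mvp {g : ℂ → ℂ} {c : ℂ} {r : ℝ} (hr : 0 < r)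
    (hg : DifferentiableOn ℂ g (closedBall c r)) :
    ∫ θ in (0:ℝ)..(2*π), g (circleMap c r θ) = ((2*π : ℝ) : ℂ) * g c := by
  have h := hg.circleIntegral_sub_inv_smul (mem_ball_self hr)
  rw [circleIntegral] at h
  simp only [deriv_circleMap, circleMap_sub_center, smul_eq_mul] at h
  have heq : ∀ θ : ℝ, circleMap 0 r θ * I * ((circleMap 0 r θ)⁻¹ * g (circleMap c r θ))
      = I * g (circleMap c r θ) := by
    intro θ
    have hne : circleMap 0 r θ ≠ 0 := by
      simpa using circleMap_ne_center (c := (0:ℂ)) (R := r) hr.ne' (θ := θ)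
    field_simp
  rw [funext heq] at h
  rw [intervalIntegral.integral_const_mul] at h
  apply mul_left_cancel₀ I_ne_zero
  rw [h]
  push_cast
  ring

-- per-circle L² estimate
theorem circle_est {g : ℂ → ℂ} {c : ℂ} {r : ℝ} (hr : 0 < r)
    (hg : DifferentiableOn ℂ g (closedBall c r)) (hcont : Continuous fun θ : ℝ => g (circleMap c r θ)) :
    ENNReal.ofReal (2*π) * (‖g c‖₊ : ENNReal)^2
      ≤ ∫⁻ θ in Ioo (-π) π, (‖g (circleMap c r θ)‖₊ : ENNReal)^2 := by
  set φ : ℝ → ℂ := fun θ => g (circleMap c r θ) with hφ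
  have h1 : ∫ θ in (0:ℝ)..(2*π), φ θ = ((2*π : ℝ) : ℂ) * g c := circle_mvp hr hg
  have hper : Function.Periodic φ (2*π) := (periodic_circleMap c r).comp g
  have h2 : ∫ θ in (-π)..(π), φ θ = ((2*π : ℝ) : ℂ) * g c := by
    have := hper.intervalIntegral_add_eq (-π) 0
    rw [← h1]
    rw [show -π + 2*π = π by ring, zero_add] at this
    exact this
  set J : ENNReal := ∫⁻ θ in Ioo (-π) π, (‖φ θ‖₊ : ENNReal)^2 with hJ
  have hππ : (-π : ℝ) ≤ π := by linarith [Real.pi_pos]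
  have hIoc : (volume.restrict (Ioo (-π) π)) = volume.restrict (Ioc (-π) π) :=
    Measure.restrict_congr_set Ioo_ae_eq_Ioc
  have h3 : ENNReal.ofReal (2*π) * (‖g c‖₊ : ENNReal)
      ≤ ∫⁻ θ in Ioc (-π) π, (‖φ θ‖₊ : ENNReal) := by
    calc ENNReal.ofReal (2*π) * (‖g c‖₊ : ENNReal)
        = (‖((2*π : ℝ) : ℂ) * g c‖₊ : ENNReal) := by
          rw [nnnorm_mul, ENNReal.coe_mul]
          congr 1
          rw [← Real.enorm_eq_ofReal (by positivity)]
          simp [enorm_eq_nnnorm]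
      _ = (‖∫ θ in Ioc (-π) π, φ θ‖₊ : ENNReal) := by
          rw [← h2, intervalIntegral.integral_of_le hππ]
      _ ≤ ∫⁻ θ in Ioc (-π) π, (‖φ θ‖₊ : ENNReal) := enorm_integral_le_lintegral_enorm _
  have h4 : ∫⁻ θ in Ioc (-π) π, (‖φ θ‖₊ : ENNReal)
      ≤ (ENNReal.ofReal (2*π)) ^ ((1:ℝ)/2) * J ^ ((1:ℝ)/2) := by
    have hCS := ENNReal.lintegral_mul_le_Lp_mul_Lq (volume.restrict (Ioc (-π) π))
      Real.HolderConjugate.two_two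
      (aemeasurable_const (b := (1:ENNReal)))
      ((hcont.measurable.nnnorm.coe_nnreal_ennreal).aemeasurable)
    simp only [Pi.mul_apply, one_mul] at hCS
    calc ∫⁻ θ in Ioc (-π) π, (‖φ θ‖₊ : ENNReal)
        ≤ (∫⁻ _ in Ioc (-π) π, (1:ENNReal) ^ (2:ℝ)) ^ ((1:ℝ)/2)
            * (∫⁻ θ in Ioc (-π) π, (‖φ θ‖₊ : ENNReal) ^ (2:ℝ)) ^ ((1:ℝ)/2) := hCS
      _ = (ENNReal.ofReal (2*π)) ^ ((1:ℝ)/2) * J ^ ((1:ℝ)/2) := by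
          congr 1
          · congr 1
            simp only [ENNReal.one_rpow, lintegral_one, Measure.restrict_apply, MeasurableSet.univ,
              univ_inter, Real.volume_Ioc]
            ring_nf
          · rw [hJ, hIoc]
            congr 1
            refine lintegral_congr fun θ => ?_
            rw [← ENNReal.rpow_natCast _ 2]
            norm_num
  -- combine and square
  have h5 : ENNReal.ofReal (2*π) * (‖g c‖₊ : ENNReal)
      ≤ (ENNReal.ofReal (2*π)) ^ ((1:ℝ)/2) * J ^ ((1:ℝ)/2) := h3.trans h4
  have h6 := pow_le_pow_left' h5 2
  rw [mul_pow, mul_pow, ← ENNReal.rpow_natCast ((ENNReal.ofReal (2*π)) ^ ((1:ℝ)/2)) 2,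
    ← ENNReal.rpow_natCast (J ^ ((1:ℝ)/2)) 2, ← ENNReal.rpow_mul, ← ENNReal.rpow_mul] at h6
  norm_num at h6
  have ha0 : ENNReal.ofReal (2*π) ≠ 0 := by
    simp [ENNReal.ofReal_eq_zero, not_le]; positivity
  have hat : ENNReal.ofReal (2*π) ≠ ⊤ := ENNReal.ofReal_ne_top
  rw [← ENNReal.mul_le_mul_iff_right ha0 hat]
  calc ENNReal.ofReal (2*π) * (ENNReal.ofReal (2*π) * (‖g c‖₊ : ENNReal)^2)
      = ENNReal.ofReal (2*π) ^ 2 * (‖g c‖₊ : ENNReal)^2 := by ring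
    _ ≤ ENNReal.ofReal (2*π) * J := by simpa [ENNReal.ofReal_mul] using h6

theorem key_est {g : ℂ → ℂ} (hg : DifferentiableOn ℂ g (ball (0:ℂ) 1)) {c : ℂ} {ρ : ℝ}
    (hρ0 : 0 < ρ) (hsub : closedBall c ρ ⊆ ball (0:ℂ) 1) :
    ENNReal.ofReal (π * ρ^2) * (‖g c‖₊ : ENNReal)^2
      ≤ ∫⁻ z in ball (0:ℂ) 1, (‖g z‖₊ : ENNReal)^2 := by
  have hb : ball c ρ ⊆ ball (0:ℂ) 1 := ball_subset_closedBall.trans hsub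
  have hgc : ContinuousOn g (ball (0:ℂ) 1) := hg.continuousOn
  classical
  set Fc : ℂ → ENNReal := (ball (0:ℂ) ρ).piecewise (fun z => ((‖g (c+z)‖₊ : ENNReal))^2) 0 with hFcdef
  have hmemc : ∀ z ∈ ball (0:ℂ) ρ, c + z ∈ ball c ρ := by
    intro z hz
    rw [mem_ball_zero_iff] at hz
    simpa [mem_ball, dist_eq_norm, add_sub_cancel_left] using hz
  have h1 : ContinuousOn (fun z : ℂ => g (c+z)) (ball (0:ℂ) ρ) :=
    hgc.comp ((continuous_const.add continuous_id).continuousOn)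
      (fun z hz => hb (hmemc z hz))
  have hFc : Measurable Fc := by
    refine ContinuousOn.measurable_piecewise ?_ continuousOn_const measurableSet_ball
    exact ((ENNReal.continuous_pow 2).comp
      (ENNReal.continuous_coe.comp continuous_nnnorm)).comp_continuousOn h1
  have hsymm_eq : ∀ p : ℝ × ℝ, (Complex.polarCoord.symm p : ℂ)
      = (p.1 : ℂ) * Complex.exp (p.2 * I) := by
    intro p
    rw [Complex.polarCoord_symm_apply, Complex.exp_mul_I]
    push_cast
    ring
  have hsymm_meas : Measurable fun p : ℝ × ℝ => (Complex.polarCoord.symm p : ℂ) := by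
    rw [funext hsymm_eq]
    exact ((Complex.continuous_ofReal.comp continuous_fst).mul
      ((Complex.continuous_exp.comp
        ((Complex.continuous_ofReal.comp continuous_snd).mul continuous_const)))).measurable
  have hcirc : ∀ r ∈ Ioo (0:ℝ) ρ, ∀ θ : ℝ,
      Fc (Complex.polarCoord.symm (r, θ)) = (‖g (circleMap c r θ)‖₊ : ENNReal)^2 := by
    intro r hr θ
    have hmem : (Complex.polarCoord.symm (r, θ) : ℂ) ∈ ball (0:ℂ) ρ := by
      rw [mem_ball_zero_iff, Complex.norm_polarCoord_symm,
        abs_of_pos hr.1]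
      exact hr.2
    rw [hFcdef, Set.piecewise_eq_of_mem _ _ _ hmem]
    have : c + (Complex.polarCoord.symm (r, θ) : ℂ) = circleMap c r θ := by
      rw [hsymm_eq]
      simp [circleMap]
    rw [this]
  have main : ∀ r ∈ Ioo (0:ℝ) ρ,
      ENNReal.ofReal r * (ENNReal.ofReal (2*π) * (‖g c‖₊ : ENNReal)^2)
        ≤ ∫⁻ θ in Ioo (-π) π, ENNReal.ofReal r * Fc (Complex.polarCoord.symm (r, θ)) := by
    intro r hr
    have hgr : DifferentiableOn ℂ g (closedBall c r) :=
      hg.mono ((closedBall_subset_closedBall hr.2.le).trans hsub)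
    have hcont : Continuous fun θ : ℝ => g (circleMap c r θ) := by
      refine hgc.comp_continuous (continuous_circleMap c r) (fun θ => ?_)
      exact ((closedBall_subset_closedBall hr.2.le).trans hsub)
        (circleMap_mem_closedBall c hr.1.le θ)
    have := circle_est hr.1 hgr hcont
    calc ENNReal.ofReal r * (ENNReal.ofReal (2*π) * (‖g c‖₊ : ENNReal)^2)
        ≤ ENNReal.ofReal r * ∫⁻ θ in Ioo (-π) π, (‖g (circleMap c r θ)‖₊ : ENNReal)^2 :=
          by gcongr
      _ = ∫⁻ θ in Ioo (-π) π, ENNReal.ofReal r * (‖g (circleMap c r θ)‖₊ : ENNReal)^2 :=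
          (lintegral_const_mul' _ _ ENNReal.ofReal_ne_top).symm
      _ = ∫⁻ θ in Ioo (-π) π, ENNReal.ofReal r * Fc (Complex.polarCoord.symm (r, θ)) := by
          refine lintegral_congr fun θ => ?_
          rw [hcirc r hr θ]
  have hr2 : ∫⁻ r in Ioo (0:ℝ) ρ, ENNReal.ofReal r = ENNReal.ofReal (ρ^2/2) := by
    rw [← ofReal_integral_eq_lintegral_ofReal]
    · congr 1
      have h2 : ∫ r in Ioo (0:ℝ) ρ, r = ∫ r in (0:ℝ)..ρ, r := by
        rw [intervalIntegral.integral_of_le hρ0.le,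
          Measure.restrict_congr_set Ioo_ae_eq_Ioc]
      rw [h2, integral_id]
      ring
    · have := (continuous_id.intervalIntegrable (μ := volume) (0:ℝ) ρ)
      rwa [intervalIntegrable_iff_integrableOn_Ioo_of_le hρ0.le] at this
    · exact (ae_restrict_iff' measurableSet_Ioo).2 (ae_of_all _ fun x hx => hx.1.le)
  have hC_ne_top : ENNReal.ofReal (2*π) * (‖g c‖₊ : ENNReal)^2 ≠ ⊤ :=
    ENNReal.mul_ne_top ENNReal.ofReal_ne_top (by simp [ENNReal.pow_ne_top])
  calc ENNReal.ofReal (π * ρ^2) * (‖g c‖₊ : ENNReal)^2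
      = ENNReal.ofReal (ρ^2/2) * (ENNReal.ofReal (2*π) * (‖g c‖₊ : ENNReal)^2) := by
        rw [← mul_assoc, ← ENNReal.ofReal_mul (by positivity)]
        congr 2
        ring
    _ = ∫⁻ r in Ioo (0:ℝ) ρ, ENNReal.ofReal r * (ENNReal.ofReal (2*π) * (‖g c‖₊ : ENNReal)^2) := by
        rw [lintegral_mul_const' _ _ hC_ne_top, hr2]
    _ ≤ ∫⁻ r in Ioo (0:ℝ) ρ,
          ∫⁻ θ in Ioo (-π) π, ENNReal.ofReal r * Fc (Complex.polarCoord.symm (r, θ)) :=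
        lintegral_mono_ae ((ae_restrict_iff' measurableSet_Ioo).2 (ae_of_all _ main))
    _ ≤ ∫⁻ r in Ioi (0:ℝ),
          ∫⁻ θ in Ioo (-π) π, ENNReal.ofReal r * Fc (Complex.polarCoord.symm (r, θ)) :=
        lintegral_mono_set Ioo_subset_Ioi_self
    _ = ∫⁻ p in (Ioi (0:ℝ)) ×ˢ Ioo (-π) π, ENNReal.ofReal p.1 * Fc (Complex.polarCoord.symm p) := by
        have hmeq : (volume : Measure (ℝ × ℝ)).restrict ((Ioi (0:ℝ)) ×ˢ Ioo (-π) π)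
            = (volume.restrict (Ioi (0:ℝ))).prod (volume.restrict (Ioo (-π) π)) := by
          rw [Measure.volume_eq_prod, Measure.prod_restrict]
        rw [hmeq, lintegral_prod]
        exact ((ENNReal.measurable_ofReal.comp measurable_fst).mul
          (hFc.comp hsymm_meas)).aemeasurable
    _ = ∫⁻ p in polarCoord.target, ENNReal.ofReal p.1 * Fc (Complex.polarCoord.symm p) := rfl
    _ = ∫⁻ z, Fc z := Complex.lintegral_comp_polarCoord_symm' Fc
    _ = ∫⁻ z in ball (0:ℂ) ρ, ((‖g (c+z)‖₊ : ENNReal))^2 := by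
        rw [hFcdef, Set.piecewise_eq_indicator, lintegral_indicator measurableSet_ball]
    _ = ∫⁻ w in ball c ρ, ((‖g w‖₊ : ENNReal))^2 := by
        have hmp : MeasurePreserving (fun z : ℂ => c + z) volume volume :=
          measurePreserving_add_left volume c
        have h := hmp.setLIntegral_comp_emb (MeasurableEquiv.addLeft c).measurableEmbedding
          (fun w => ((‖g w‖₊ : ENNReal))^2) (ball (0:ℂ) ρ)
        have himg : (fun z : ℂ => c + z) '' ball (0:ℂ) ρ = ball c ρ := by
          ext z
          constructor
          · rintro ⟨w, hw, rfl⟩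
            exact hmemc w hw
          · intro hz
            refine ⟨z - c, ?_, by ring⟩
            rw [mem_ball_zero_iff]
            simpa [dist_eq_norm] using hz
        rwa [himg] at h
    _ ≤ ∫⁻ z in ball (0:ℂ) 1, ((‖g z‖₊ : ENNReal))^2 := lintegral_mono_set hb

theorem sq_eLpNorm (f : ℂ → ℂ) (μ : Measure ℂ) :
    (eLpNorm f 2 μ)^2 = ∫⁻ x, (‖f x‖₊ : ENNReal)^2 ∂μ := by
  rw [eLpNorm_eq_lintegral_rpow_enorm_toReal two_ne_zero ENNReal.ofNat_ne_top]
  rw [ENNReal.toReal_ofNat]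
  rw [← ENNReal.rpow_natCast _ 2, ← ENNReal.rpow_mul]
  norm_num
  rfl

theorem ptwise_est {h : ℂ → ℂ} (hh : DifferentiableOn ℂ h (ball (0:ℂ) 1)) {R : ℝ} (hR : R < 1)
    {z : ℂ} (hz : z ∈ ball (0:ℂ) R) :
    (‖h z‖₊ : ENNReal)^2 ≤ (ENNReal.ofReal (π * ((1-R)/2)^2))⁻¹
      * ∫⁻ w in ball (0:ℂ) 1, (‖h w‖₊ : ENNReal)^2 := by
  rw [mem_ball_zero_iff] at hz
  have hR0 : 0 < R := lt_of_le_of_lt (norm_nonneg z) hz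
  set ρ : ℝ := (1-R)/2 with hρdef
  have hρ0 : 0 < ρ := by rw [hρdef]; linarith
  have hsub : closedBall z ρ ⊆ ball (0:ℂ) 1 := by
    intro w hw
    rw [mem_closedBall, dist_eq_norm] at hw
    rw [mem_ball_zero_iff]
    calc ‖w‖ = ‖w - z + z‖ := by ring_nf
      _ ≤ ‖w - z‖ + ‖z‖ := norm_add_le _ _
      _ < ρ + R := by
          rcases lt_or_ge ‖w - z‖ ρ with h' | h'
          · exact add_lt_add_of_lt_of_le h' hz.le
          · exact add_lt_add_of_le_of_lt hw hz
      _ ≤ 1 := by rw [hρdef]; linarith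
  have hkey := key_est hh hρ0 hsub
  have ha0 : ENNReal.ofReal (π * ρ^2) ≠ 0 := by
    simp only [ne_eq, ENNReal.ofReal_eq_zero, not_le]
    positivity
  calc (‖h z‖₊ : ENNReal)^2
      = (ENNReal.ofReal (π * ρ^2))⁻¹ * (ENNReal.ofReal (π * ρ^2) * (‖h z‖₊ : ENNReal)^2) := by
        rw [← mul_assoc, ENNReal.inv_mul_cancel ha0 ENNReal.ofReal_ne_top, one_mul]
    _ ≤ (ENNReal.ofReal (π * ρ^2))⁻¹ * ∫⁻ w in ball (0:ℂ) 1, (‖h w‖₊ : ENNReal)^2 :=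
        by gcongr

end BergmanAux

theorem bergman_space_closed :
    IsClosed {f : Lp ℂ 2 (volume.restrict (ball (0 : ℂ) 1)) |
      ∃ g : ℂ → ℂ, DifferentiableOn ℂ g (ball (0 : ℂ) 1) ∧
        ∀ᵐ z ∂(volume.restrict (ball (0 : ℂ) 1)), f z = g z} := by
  set μ := volume.restrict (ball (0 : ℂ) 1) with hμ
  refine IsSeqClosed.isClosed ?_
  intro F f hF hf
  choose gs hgd hgae using hF
  have hcauchy : CauchySeq F := hf.cauchySeq
  -- uniform Cauchy estimate
  have estNorm : ∀ (m n : ℕ) {R : ℝ}, R < 1 → ∀ z ∈ ball (0:ℂ) R,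
      (‖gs m z - gs n z‖₊ : ENNReal)^2 ≤ (ENNReal.ofReal (π * ((1-R)/2)^2))⁻¹
        * (eLpNorm (⇑(F m) - ⇑(F n)) 2 μ)^2 := by
    intro m n R hR z hz
    have hdiff : DifferentiableOn ℂ (fun w => gs m w - gs n w) (ball (0:ℂ) 1) :=
      (hgd m).sub (hgd n)
    have h1 := ptwise_est hdiff hR hz
    have h2 : ∫⁻ w in ball (0:ℂ) 1, (‖gs m w - gs n w‖₊ : ENNReal)^2
        = (eLpNorm (⇑(F m) - ⇑(F n)) 2 μ)^2 := by
      rw [sq_eLpNorm]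
      refine lintegral_congr_ae ?_
      filter_upwards [hgae m, hgae n] with w h1 h2
      simp [h1, h2]
    rw [h2] at h1
    exact h1
  have hUC : ∀ R : ℝ, R < 1 → UniformCauchySeqOn gs atTop (ball (0:ℂ) R) := by
    intro R hR
    rw [Metric.uniformCauchySeqOn_iff]
    intro ε hε
    set C : ℝ := Real.sqrt ((ENNReal.ofReal (π * ((1-R)/2)^2))⁻¹).toReal with hC
    have hC0 : 0 ≤ C := Real.sqrt_nonneg _
    obtain ⟨N, hN⟩ := Metric.cauchySeq_iff.mp hcauchy (ε / (C+1)) (by positivity)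
    refine ⟨N, fun m hm n hn z hz => ?_⟩
    have h1 := estNorm m n hR z hz
    have hEne : eLpNorm (⇑(F m) - ⇑(F n)) 2 μ ≠ ⊤ := by
      rw [eLpNorm_congr_ae (Lp.coeFn_sub (F m) (F n)).symm]
      exact Lp.eLpNorm_ne_top _
    have hdistF : (eLpNorm (⇑(F m) - ⇑(F n)) 2 μ).toReal = dist (F m) (F n) :=
      (Lp.dist_def _ _).symm
    have h2 : ‖gs m z - gs n z‖^2 ≤ C^2 * dist (F m) (F n)^2 := by
      have hrhs_ne : (ENNReal.ofReal (π * ((1-R)/2)^2))⁻¹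
          * (eLpNorm (⇑(F m) - ⇑(F n)) 2 μ)^2 ≠ ⊤ := by
        refine ENNReal.mul_ne_top ?_ (ENNReal.pow_ne_top hEne)
        refine ENNReal.inv_ne_top.mpr ?_
        have hR1 : (0:ℝ) < 1 - R := by linarith
        simp only [ne_eq, ENNReal.ofReal_eq_zero, not_le]
        positivity
      have := ENNReal.toReal_mono hrhs_ne h1
      rw [ENNReal.toReal_pow, ENNReal.toReal_mul, ENNReal.toReal_pow, ENNReal.coe_toReal,
        coe_nnnorm, hdistF] at this
      calc ‖gs m z - gs n z‖^2 ≤ _ := this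
        _ = C^2 * dist (F m) (F n)^2 := by
            rw [hC, Real.sq_sqrt ENNReal.toReal_nonneg]
    have h3 : dist (gs m z) (gs n z) ≤ C * dist (F m) (F n) := by
      rw [dist_eq_norm]
      have hx : 0 ≤ ‖gs m z - gs n z‖ := norm_nonneg _
      nlinarith [dist_nonneg (x := F m) (y := F n), mul_nonneg hC0 (dist_nonneg (x := F m) (y := F n))]
    have h4 : dist (F m) (F n) < ε / (C+1) := hN m hm n hn
    calc dist (gs m z) (gs n z) ≤ C * dist (F m) (F n) := h3
      _ < ε := by
          rcases eq_or_lt_of_le hC0 with h' | h'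
          · rw [← h']; simpa using hε
          · have : C * dist (F m) (F n) < C * (ε / (C+1)) :=
              (mul_lt_mul_iff_right₀ h').mpr h4
            refine this.trans_le ?_
            have hd : ε/(C+1) * (C+1) = ε := div_mul_cancel₀ _ (by positivity)
            nlinarith [div_nonneg hε.le (by positivity : (0:ℝ) ≤ C+1)]
  -- pointwise limit
  have hptC : ∀ z ∈ ball (0:ℂ) 1, CauchySeq fun n => gs n z := by
    intro z hz
    rw [mem_ball_zero_iff] at hz
    have hR : (1 + ‖z‖)/2 < 1 := by linarith
    exact (hUC _ hR).cauchySeq (by rw [mem_ball_zero_iff]; linarith)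
  classical
  set g : ℂ → ℂ := fun z => if hz : z ∈ ball (0:ℂ) 1 then limUnder atTop (fun n => gs n z) else 0
    with hgdef
  have htends : ∀ z ∈ ball (0:ℂ) 1, Tendsto (fun n => gs n z) atTop (𝓝 (g z)) := by
    intro z hz
    have h0 := (hptC z hz).tendsto_limUnder
    have hzq : g z = limUnder atTop fun n => gs n z := by
      rw [hgdef]
      exact dif_pos hz
    rw [hzq]
    exact h0
  have hTLU : TendstoLocallyUniformlyOn gs g atTop (ball (0:ℂ) 1) := by
    rw [tendstoLocallyUniformlyOn_iff_forall_isCompact isOpen_ball]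
    intro K hK hKc
    rcases K.eq_empty_or_nonempty with rfl | hne
    · simp [TendstoUniformlyOn]
    obtain ⟨z₀, hz₀K, hz₀⟩ := hKc.exists_isMaxOn hne continuous_norm.continuousOn
    have hz₀1 : ‖z₀‖ < 1 := mem_ball_zero_iff.mp (hK hz₀K)
    set R : ℝ := (1 + ‖z₀‖)/2 with hRdef
    have hR : R < 1 := by rw [hRdef]; linarith
    have hKR : K ⊆ ball (0:ℂ) R := by
      intro z hzK
      rw [mem_ball_zero_iff]
      have h5 := hz₀ hzK
      simp only [mem_setOf_eq] at h5
      rw [hRdef]; linarith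
    have hUCR := hUC R hR
    have hTU : TendstoUniformlyOn gs g atTop (ball (0:ℂ) R) :=
      hUCR.tendstoUniformlyOn_of_tendsto fun z hz =>
        htends z (ball_subset_ball hR.le hz)
    exact hTU.mono hKR
  have hgdiff : DifferentiableOn ℂ g (ball (0:ℂ) 1) :=
    hTLU.differentiableOn (Eventually.of_forall hgd) isOpen_ball
  -- a.e. identification
  have heL : Tendsto (fun n => eLpNorm (⇑(F n) - ⇑f) 2 μ) atTop (𝓝 0) :=
    (Lp.tendsto_Lp_iff_tendsto_eLpNorm' F f).mp hf
  have hTIM : TendstoInMeasure μ (fun n => ⇑(F n)) atTop ⇑f :=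
    tendstoInMeasure_of_tendsto_eLpNorm two_ne_zero
      (fun n => Lp.aestronglyMeasurable (F n)) (Lp.aestronglyMeasurable f) heL
  obtain ⟨ns, hns, haesub⟩ := hTIM.exists_seq_tendsto_ae
  refine ⟨g, hgdiff, ?_⟩
  have hmem : ∀ᵐ z ∂μ, z ∈ ball (0:ℂ) 1 := ae_restrict_mem measurableSet_ball
  filter_upwards [haesub, ae_all_iff.2 hgae, hmem] with z h1 h2 h3
  have h4 : Tendsto (fun i => gs (ns i) z) atTop (𝓝 (g z)) :=
    (htends z h3).comp hns.tendsto_atTop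
  have h5 : Tendsto (fun i => gs (ns i) z) atTop (𝓝 (f z)) := by
    refine h1.congr fun i => ?_
    rw [h2 (ns i)]
  exact tendsto_nhds_unique h5 h4
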